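/- Let L and Q be graph Laplacian matrices (symmetric, zero row sums, nonpositive off-diagonals) on N nodes such that for every i ≠ j at most one of L_{i,j}, Q_{i,j} is nonzero. Fix ε > 0 and define γ_i = ε / (Q_{i,i} − Σ_{j≠i} Q_{i,j}) for rows with positive denominator, and γ = min_i γ_i. Then the matrix A = L − γQ + εI has all Gershgorin disc left-ends nonnegative, and hence A is positive semi-definite. -/

import Mathlib

open Matrix

/-- With Laplacians L, Q of disjoint off-diagonal supports, ε > 0, and
γ = min_i ε/(Q_ii - Σ_{j≠i}Q_ij) over rows with positive denominator, all Gershgorin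
disc left-ends of A = L - γQ + εI are nonnegative and A is PSD. -/
theorem stmt7 {N : ℕ} (L Q : Matrix (Fin N) (Fin N) ℝ)
    (hLsym : L.IsSymm) (hQsym : Q.IsSymm)
    (hLrow : ∀ i, ∑ j, L i j = 0) (hQrow : ∀ i, ∑ j, Q i j = 0)
    (hLoff : ∀ i j, i ≠ j → L i j ≤ 0) (hQoff : ∀ i j, i ≠ j → Q i j ≤ 0)
    (hdisj : ∀ i j, i ≠ j → L i j = 0 ∨ Q i j = 0)
    (ε : ℝ) (hε : 0 < ε)
    (d : Fin N → ℝ) (hd : ∀ i, d i = Q i i - ∑ j ∈ Finset.univ \ {i}, Q i j)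
    (S : Finset (Fin N)) (hS : ∀ i, i ∈ S ↔ 0 < d i) (hSne : S.Nonempty)
    (γ : ℝ) (hγ : γ = S.inf' hSne (fun i => ε / d i)) :
    let A := L - γ • Q + ε • (1 : Matrix (Fin N) (Fin N) ℝ)
    (∀ i, 0 ≤ A i i - ∑ j ∈ Finset.univ \ {i}, |A i j|) ∧ A.PosSemidef := by
  intro A
  -- γ is nonnegative
  have hγ0 : 0 ≤ γ := by
    rw [hγ]
    apply le_of_lt
    rw [Finset.lt_inf'_iff]
    intro i hi
    exact div_pos hε ((hS i).1 hi)
  -- entries of A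
  have hAdiag : ∀ i, A i i = L i i - γ * Q i i + ε := by
    intro i
    simp [A, Matrix.sub_apply, Matrix.add_apply, Matrix.smul_apply, Matrix.one_apply]
  have hAoff : ∀ i j, i ≠ j → A i j = L i j - γ * Q i j := by
    intro i j hij
    simp [A, Matrix.sub_apply, Matrix.add_apply, Matrix.smul_apply, Matrix.one_apply, hij]
  have habs : ∀ i j, i ≠ j → |A i j| = -(L i j) - γ * Q i j := by
    intro i j hij
    rw [hAoff i j hij]
    have h1 : 0 ≤ -(L i j) := by linarith [hLoff i j hij]
    have h2 : 0 ≤ -(γ * Q i j) := by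
      have := hQoff i j hij
      nlinarith
    rcases hdisj i j hij with h | h
    · rw [abs_of_nonneg (by nlinarith [hQoff i j hij] : (0:ℝ) ≤ L i j - γ * Q i j)]
      rw [h]; ring
    · rw [abs_of_nonpos (by nlinarith [hLoff i j hij] : L i j - γ * Q i j ≤ 0)]
      rw [h]; ring
  -- the left ends
  have hleft : ∀ i, A i i - ∑ j ∈ Finset.univ \ {i}, |A i j| = ε - γ * d i := by
    intro i
    have hsum : ∑ j ∈ Finset.univ \ {i}, |A i j| =
        ∑ j ∈ Finset.univ \ {i}, (-(L i j) - γ * Q i j) := by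
      apply Finset.sum_congr rfl
      intro j hj
      have hij : i ≠ j := by
        simp [Finset.mem_sdiff] at hj
        exact fun h => hj h.symm
      exact habs i j hij
    have hLs : ∑ j ∈ Finset.univ \ {i}, L i j = -(L i i) := by
      have h1 : ∑ j ∈ Finset.univ \ {i}, L i j = ∑ j, L i j - ∑ j ∈ ({i} : Finset (Fin N)), L i j :=
        Finset.sum_sdiff_eq_sub (Finset.subset_univ {i})
      rw [h1, hLrow i, Finset.sum_singleton]
      ring
    have hQs : d i = Q i i - ∑ j ∈ Finset.univ \ {i}, Q i j := hd i
    rw [hsum, hAdiag i]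
    rw [Finset.sum_sub_distrib, Finset.sum_neg_distrib, ← Finset.mul_sum]
    rw [hLs]
    rw [hQs]
    ring
  have hle : ∀ i, 0 ≤ A i i - ∑ j ∈ Finset.univ \ {i}, |A i j| := by
    intro i
    rw [hleft i]
    by_cases hdi : 0 < d i
    · have hiS : i ∈ S := (hS i).2 hdi
      have : γ ≤ ε / d i := hγ ▸ Finset.inf'_le _ hiS
      have := (le_div_iff₀ hdi).1 this
      linarith
    · push_neg at hdi
      nlinarith
  refine ⟨hle, ?_⟩
  -- A is symmetric hence Hermitian
  have hAsym : A.IsSymm := by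
    have h1 : (γ • Q).IsSymm := hQsym.smul γ
    have h2 : (ε • (1 : Matrix (Fin N) (Fin N) ℝ)).IsSymm := (Matrix.isSymm_one).smul ε
    exact (hLsym.sub h1).add h2
  have hA : A.IsHermitian := by
    rwa [Matrix.IsHermitian, conjTranspose_eq_transpose_of_trivial]
  rw [hA.posSemidef_iff_eigenvalues_nonneg, Pi.le_def]
  simp only [Pi.zero_apply]
  intro i
  set μ := hA.eigenvalues i with hμ
  have heig : Module.End.HasEigenvalue (Matrix.toLin' A) μ := by
    rw [Module.End.hasEigenvalue_iff_mem_spectrum]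
    have := hA.eigenvalues_mem_spectrum_real i
    rwa [← AlgEquiv.spectrum_eq (Matrix.toLinAlgEquiv' :
      Matrix (Fin N) (Fin N) ℝ ≃ₐ[ℝ] _)] at this
  obtain ⟨k, hk⟩ := eigenvalue_mem_ball heig
  rw [Metric.mem_closedBall, Real.dist_eq] at hk
  have hball : A k k - ∑ j ∈ Finset.univ.erase k, ‖A k j‖ ≤ μ := by
    have := abs_le.1 hk
    linarith [this.1]
  have herase : ∑ j ∈ Finset.univ.erase k, ‖A k j‖ = ∑ j ∈ Finset.univ \ {k}, |A k j| := by
    rw [Finset.sdiff_singleton_eq_erase]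
    simp [Real.norm_eq_abs]
  have := hle k
  rw [← herase] at this
  linarith
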